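/- arXiv:1709.09855 — 2 statements merged into one kernel-verified Lean document; each statement's English description precedes it below -/
import Mathlib

section
/- For every γ ∈ ℝ, the first eigenvalue μ(γ, ξ) of the Robin realization on L²(ℝ₊) of H[γ,ξ] = −d²/dt² + (t − ξ)² with boundary condition u'(0) = γ u(0) satisfies lim_{ξ→−∞} μ(γ,ξ) = +∞ and lim_{ξ→+∞} μ(γ,ξ) = 1. -/
open MeasureTheory Set Filter Topology

/-- Membership in the weighted space `B¹(ℝ₊)`:
`u ∈ L²(ℝ₊)`, `u' ∈ L²(ℝ₊)` and `t·u ∈ L²(ℝ₊)`. -/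
def MemB1Half (u : ℝ → ℂ) : Prop :=
  Differentiable ℝ u ∧
  IntegrableOn (fun t => ‖u t‖ ^ 2) (Ioi 0) volume ∧
  IntegrableOn (fun t => ‖deriv u t‖ ^ 2) (Ioi 0) volume ∧
  IntegrableOn (fun t => t ^ 2 * ‖u t‖ ^ 2) (Ioi 0) volume

/-- First eigenvalue `μ(γ,ξ)` of the Robin realization of `-d²/dt² + (t-ξ)²` on `L²(ℝ₊)`
with boundary condition `u'(0) = γ u(0)`, defined via the Rayleigh quotient. -/
noncomputable def robinMu (γ ξ : ℝ) : ℝ :=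
  sInf {r : ℝ | ∃ u : ℝ → ℂ, MemB1Half u ∧
    (0 < ∫ t in Ioi (0:ℝ), ‖u t‖ ^ 2) ∧
    r = ((∫ t in Ioi (0:ℝ), (‖deriv u t‖ ^ 2 + (t - ξ) ^ 2 * ‖u t‖ ^ 2)) + γ * ‖u 0‖ ^ 2) /
      ∫ t in Ioi (0:ℝ), ‖u t‖ ^ 2}

/-- The de Gennes function `Θ(γ) = inf_{ξ ∈ ℝ} μ(γ,ξ)`. -/
noncomputable def Theta (γ : ℝ) : ℝ := ⨅ ξ : ℝ, robinMu γ ξ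

namespace RobinAux

open Real

/-! ### Elementary complex norm facts -/

theorem my_norm_sq (z : ℂ) : ‖z‖^2 = z.re^2 + z.im^2 := by
  rw [Complex.sq_norm, Complex.normSq_apply]; ring

theorem my_norm_sq_expand (z w : ℂ) (s : ℝ) :
    ‖w + (s:ℂ)*z‖^2 = ‖w‖^2 + s^2*‖z‖^2 + s*(2*(z.re*w.re + z.im*w.im)) := by
  simp only [my_norm_sq, Complex.add_re, Complex.add_im, Complex.mul_re, Complex.mul_im,
    Complex.ofReal_re, Complex.ofReal_im]
  ring

theorem my_hasDerivAt_normSq (u : ℝ → ℂ) (d : ℂ) (t : ℝ) (hu : HasDerivAt u d t) :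
    HasDerivAt (fun t => ‖u t‖^2) (2*((u t).re*d.re + (u t).im*d.im)) t := by
  have hre : HasDerivAt (fun t => (u t).re) d.re t :=
    (Complex.reCLM.hasFDerivAt.comp_hasDerivAt t hu)
  have him : HasDerivAt (fun t => (u t).im) d.im t :=
    (Complex.imCLM.hasFDerivAt.comp_hasDerivAt t hu)
  have h2 := (hre.mul hre).add (him.mul him)
  have heq : (fun t => ‖u t‖^2) = fun t => (u t).re * (u t).re + (u t).im * (u t).im := by
    funext x; rw [my_norm_sq]; ring
  rw [heq]
  refine h2.congr_deriv ?_
  ring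

/-! ### Integration helpers -/

theorem my_dom (f g : ℝ → ℝ) (hg : IntegrableOn g (Ioi 0) volume)
    (hf : AEStronglyMeasurable f (volume.restrict (Ioi 0)))
    (hbd : ∀ t ∈ Ioi (0:ℝ), |f t| ≤ g t) : IntegrableOn f (Ioi 0) volume :=
  Integrable.mono' hg hf <| (ae_restrict_iff' measurableSet_Ioi).2 <| ae_of_all _ <| by
    simpa [Real.norm_eq_abs] using hbd

theorem my_integral_deriv_Ioi (h h' : ℝ → ℝ)
    (hd : ∀ t, HasDerivAt h (h' t) t)
    (hi : IntegrableOn h (Ioi 0) volume)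
    (hi' : IntegrableOn h' (Ioi 0) volume) :
    ∫ t in Ioi (0:ℝ), h' t = - h 0 := by
  have tz : Tendsto h atTop (𝓝 0) :=
    tendsto_zero_of_hasDerivAt_of_integrableOn_Ioi (fun x _ => hd x) hi' hi
  have := integral_Ioi_of_hasDerivAt_of_tendsto' (a := 0) (fun x _ => hd x) hi' tz
  simpa using this

/-! ### The main quadratic-form inequality -/

theorem my_key (γ ξ c₀ a b m : ℝ) (W W' : ℝ → ℝ)
    (hW : ∀ t, HasDerivAt W (W' t) t)
    (hW0 : W 0 = -γ)
    (ha : 0 ≤ a) (hb : 0 ≤ b)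
    (hWsq : ∀ t ∈ Ioi (0:ℝ), W t ^ 2 ≤ a + b * t ^ 2)
    (hW'bd : ∀ t ∈ Ioi (0:ℝ), |W' t| ≤ m)
    (hlow : ∀ t ∈ Ioi (0:ℝ), c₀ ≤ W' t - W t ^ 2 + (t - ξ) ^ 2)
    (u : ℝ → ℂ) (hu : MemB1Half u) :
    c₀ * ∫ t in Ioi (0:ℝ), ‖u t‖ ^ 2
      ≤ (∫ t in Ioi (0:ℝ), (‖deriv u t‖ ^ 2 + (t - ξ) ^ 2 * ‖u t‖ ^ 2)) + γ * ‖u 0‖ ^ 2 := by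
  obtain ⟨hdiff, hρ, hκ, hpt⟩ := hu
  set ρ : ℝ → ℝ := fun t => ‖u t‖ ^ 2 with hρdef
  set κ : ℝ → ℝ := fun t => ‖deriv u t‖ ^ 2 with hκdef
  set D : ℝ → ℝ := fun t => 2*((u t).re*(deriv u t).re + (u t).im*(deriv u t).im) with hDdef
  have hρnn : ∀ t, 0 ≤ ρ t := fun t => by positivity
  have hρt : ∀ t, ρ t = (u t).re^2 + (u t).im^2 := fun t => my_norm_sq _
  have hκt : ∀ t, κ t = (deriv u t).re^2 + (deriv u t).im^2 := fun t => my_norm_sq _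
  have hDt : ∀ t, D t = 2*((u t).re*(deriv u t).re + (u t).im*(deriv u t).im) := fun t => rfl
  have hDd : ∀ t, HasDerivAt ρ (D t) t := fun t =>
    my_hasDerivAt_normSq u (deriv u t) t (hdiff t).hasDerivAt
  -- measurability
  have mu : Continuous u := hdiff.continuous
  have mdu : Measurable (deriv u) := measurable_deriv u
  have mρ : Continuous ρ := (mu.norm.pow 2)
  have mD : Measurable D := by
    apply Measurable.const_mul
    exact ((Complex.measurable_re.comp mu.measurable).mul (Complex.measurable_re.comp mdu)).add
      ((Complex.measurable_im.comp mu.measurable).mul (Complex.measurable_im.comp mdu))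
  have mW : Continuous W := by
    rw [continuous_iff_continuousAt]; exact fun t => (hW t).continuousAt
  -- integrability of the various products
  have hbig : IntegrableOn (fun t => a * ρ t + b * (t^2 * ρ t) + κ t) (Ioi 0) volume :=
    ((hρ.const_mul a).add (hpt.const_mul b)).add hκ
  have hmed : IntegrableOn (fun t => a * ρ t + b * (t^2 * ρ t)) (Ioi 0) volume :=
    (hρ.const_mul a).add (hpt.const_mul b)
  have hmed1 : IntegrableOn (fun t => a * ρ t + b * (t^2 * ρ t) + ρ t) (Ioi 0) volume :=
    hmed.add hρ
  have hWD : IntegrableOn (fun t => W t * D t) (Ioi 0) volume := by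
    refine my_dom _ _ hbig ((mW.measurable.mul mD).aestronglyMeasurable) fun t ht => ?_
    have h1 := hρt t; have h2 := hκt t; have h3 := hWsq t ht; have h4 := hDt t
    rw [abs_le, h4]
    constructor
    · nlinarith [sq_nonneg (W t * (u t).re + (deriv u t).re),
        sq_nonneg (W t * (u t).im + (deriv u t).im), hρnn t,
        mul_nonneg (mul_nonneg hb (sq_nonneg t)) (hρnn t),
        mul_le_mul_of_nonneg_right h3 (hρnn t)]
    · nlinarith [sq_nonneg (W t * (u t).re - (deriv u t).re),
        sq_nonneg (W t * (u t).im - (deriv u t).im), hρnn t,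
        mul_nonneg (mul_nonneg hb (sq_nonneg t)) (hρnn t),
        mul_le_mul_of_nonneg_right h3 (hρnn t)]
  have hWsqρ : IntegrableOn (fun t => W t ^ 2 * ρ t) (Ioi 0) volume := by
    refine my_dom _ _ hmed (((mW.pow 2).mul mρ).aestronglyMeasurable) fun t ht => ?_
    have h3 := hWsq t ht
    rw [abs_of_nonneg (by positivity)]
    nlinarith [hρnn t, mul_le_mul_of_nonneg_right h3 (hρnn t)]
  have hWρ : IntegrableOn (fun t => W t * ρ t) (Ioi 0) volume := by
    refine my_dom _ _ hmed1 ((mW.mul mρ).aestronglyMeasurable) fun t ht => ?_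
    have h3 := hWsq t ht
    rw [abs_mul, abs_of_nonneg (hρnn t)]
    nlinarith [hρnn t, sq_nonneg (|W t| - 1), abs_nonneg (W t), sq_abs (W t),
      mul_le_mul_of_nonneg_right h3 (hρnn t),
      mul_nonneg (mul_nonneg hb (sq_nonneg t)) (hρnn t),
      mul_nonneg ha (hρnn t)]
  have hW'ρ : IntegrableOn (fun t => W' t * ρ t) (Ioi 0) volume := by
    refine my_dom _ _ (hρ.const_mul m) (by
      have mW' : Measurable W' := by
        have : W' = deriv W := funext fun t => ((hW t).deriv).symm
        rw [this]; exact measurable_deriv W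
      exact (mW'.mul mρ.measurable).aestronglyMeasurable) fun t ht => ?_
    rw [abs_mul, abs_of_nonneg (hρnn t)]
    exact mul_le_mul_of_nonneg_right (hW'bd t ht) (hρnn t)
  have hshiftρ : IntegrableOn (fun t => (t - ξ)^2 * ρ t) (Ioi 0) volume := by
    have hmed2 : IntegrableOn (fun t => 2 * (t^2 * ρ t) + 2*ξ^2 * ρ t) (Ioi 0) volume :=
      (hpt.const_mul 2).add (hρ.const_mul (2*ξ^2))
    refine my_dom _ _ hmed2
      (((continuous_id.sub continuous_const).pow 2 |>.mul mρ).aestronglyMeasurable)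
      fun t ht => ?_
    rw [abs_of_nonneg (by positivity)]
    nlinarith [hρnn t, mul_nonneg (sq_nonneg (t+ξ)) (hρnn t)]
  -- FTC identity
  have hFTC : ∫ t in Ioi (0:ℝ), (W' t * ρ t + W t * D t) = γ * ρ 0 := by
    rw [my_integral_deriv_Ioi (fun t => W t * ρ t) _ (fun t => (hW t).mul (hDd t)) hWρ
      (hW'ρ.add hWD), hW0]
    ring
  -- positivity of the square integral
  have hE : (0:ℝ) ≤ ∫ t in Ioi (0:ℝ), ‖deriv u t + (W t : ℂ) * u t‖^2 :=
    setIntegral_nonneg measurableSet_Ioi fun t _ => by positivity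
  have i1 : IntegrableOn (fun t => κ t + W t ^ 2 * ρ t) (Ioi 0) volume := hκ.add hWsqρ
  have e1 : ∫ t in Ioi (0:ℝ), (κ t + W t ^ 2 * ρ t)
      = (∫ t in Ioi (0:ℝ), κ t) + ∫ t in Ioi (0:ℝ), W t ^ 2 * ρ t := integral_add hκ hWsqρ
  have hEexp : ∫ t in Ioi (0:ℝ), ‖deriv u t + (W t : ℂ) * u t‖^2
      = ((∫ t in Ioi (0:ℝ), κ t) + (∫ t in Ioi (0:ℝ), W t ^2 * ρ t))
        + ∫ t in Ioi (0:ℝ), W t * D t := by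
    have hfun : (fun t => ‖deriv u t + (W t : ℂ) * u t‖^2)
        = fun t => (κ t + W t ^2 * ρ t) + W t * D t := by
      funext t
      have := my_norm_sq_expand (u t) (deriv u t) (W t)
      rw [this, hDt t, hρt t, hκt t, my_norm_sq (u t), my_norm_sq (deriv u t)]
    rw [hfun]
    have e2 : ∫ t in Ioi (0:ℝ), ((κ t + W t ^ 2 * ρ t) + W t * D t)
        = (∫ t in Ioi (0:ℝ), (κ t + W t ^ 2 * ρ t)) + ∫ t in Ioi (0:ℝ), W t * D t :=
      integral_add i1 hWD
    rw [e2, e1]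
  have hsplit : ∫ t in Ioi (0:ℝ), (W' t * ρ t + W t * D t)
      = (∫ t in Ioi (0:ℝ), W' t * ρ t) + ∫ t in Ioi (0:ℝ), W t * D t :=
    integral_add hW'ρ hWD
  have hRHS : ∫ t in Ioi (0:ℝ), (‖deriv u t‖ ^ 2 + (t - ξ) ^ 2 * ‖u t‖ ^ 2)
      = (∫ t in Ioi (0:ℝ), κ t) + ∫ t in Ioi (0:ℝ), (t - ξ)^2 * ρ t :=
    integral_add hκ hshiftρ
  have i3 : IntegrableOn (fun t => W' t * ρ t - W t ^ 2 * ρ t) (Ioi 0) volume := hW'ρ.sub hWsqρ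
  have hcombo : IntegrableOn (fun t => (W' t - W t ^ 2 + (t - ξ)^2) * ρ t) (Ioi 0) volume := by
    have hfun : (fun t => (W' t - W t ^ 2 + (t - ξ)^2) * ρ t)
        = fun t => (W' t * ρ t - W t ^2 * ρ t) + (t - ξ)^2 * ρ t := by
      funext t; ring
    rw [hfun]; exact i3.add hshiftρ
  have hmono : c₀ * (∫ t in Ioi (0:ℝ), ρ t)
      ≤ ∫ t in Ioi (0:ℝ), (W' t - W t ^ 2 + (t - ξ)^2) * ρ t := by
    rw [← integral_const_mul]
    refine setIntegral_mono_on (hρ.const_mul c₀) hcombo measurableSet_Ioi fun t ht => ?_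
    exact mul_le_mul_of_nonneg_right (hlow t ht) (hρnn t)
  have hcsplit : ∫ t in Ioi (0:ℝ), (W' t - W t ^ 2 + (t - ξ)^2) * ρ t
      = ((∫ t in Ioi (0:ℝ), W' t * ρ t) - ∫ t in Ioi (0:ℝ), W t ^2 * ρ t)
        + ∫ t in Ioi (0:ℝ), (t - ξ)^2 * ρ t := by
    have hfun : (fun t => (W' t - W t ^ 2 + (t - ξ)^2) * ρ t)
        = fun t => (W' t * ρ t - W t ^2 * ρ t) + (t - ξ)^2 * ρ t := by
      funext t; ring
    rw [hfun]
    have e4 : ∫ t in Ioi (0:ℝ), ((W' t * ρ t - W t ^ 2 * ρ t) + (t - ξ)^2 * ρ t)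
        = (∫ t in Ioi (0:ℝ), (W' t * ρ t - W t ^ 2 * ρ t))
          + ∫ t in Ioi (0:ℝ), (t - ξ)^2 * ρ t := integral_add i3 hshiftρ
    have e5 : ∫ t in Ioi (0:ℝ), (W' t * ρ t - W t ^ 2 * ρ t)
        = (∫ t in Ioi (0:ℝ), W' t * ρ t) - ∫ t in Ioi (0:ℝ), W t ^ 2 * ρ t :=
      integral_sub hW'ρ hWsqρ
    rw [e4, e5]
  have hρ0 : ρ 0 = ‖u 0‖^2 := rfl
  have hL : (∫ t in Ioi (0:ℝ), ‖u t‖ ^ 2) = ∫ t in Ioi (0:ℝ), ρ t := rfl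
  rw [hL, hRHS, ← hρ0]
  linarith [hE, hEexp, hFTC, hsplit, hmono, hcsplit]

/-! ### The Rayleigh quotient set -/

def rSet (γ ξ : ℝ) : Set ℝ :=
  {r : ℝ | ∃ u : ℝ → ℂ, MemB1Half u ∧
    (0 < ∫ t in Ioi (0:ℝ), ‖u t‖ ^ 2) ∧
    r = ((∫ t in Ioi (0:ℝ), (‖deriv u t‖ ^ 2 + (t - ξ) ^ 2 * ‖u t‖ ^ 2)) + γ * ‖u 0‖ ^ 2) /
      ∫ t in Ioi (0:ℝ), ‖u t‖ ^ 2}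

theorem robinMu_eq (γ ξ : ℝ) : robinMu γ ξ = sInf (rSet γ ξ) := rfl

theorem rSet_lower (γ ξ c₀ a b m : ℝ) (W W' : ℝ → ℝ)
    (hW : ∀ t, HasDerivAt W (W' t) t)
    (hW0 : W 0 = -γ)
    (ha : 0 ≤ a) (hb : 0 ≤ b)
    (hWsq : ∀ t ∈ Ioi (0:ℝ), W t ^ 2 ≤ a + b * t ^ 2)
    (hW'bd : ∀ t ∈ Ioi (0:ℝ), |W' t| ≤ m)
    (hlow : ∀ t ∈ Ioi (0:ℝ), c₀ ≤ W' t - W t ^ 2 + (t - ξ) ^ 2) :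
    ∀ r ∈ rSet γ ξ, c₀ ≤ r := by
  rintro r ⟨u, hu, hpos, rfl⟩
  rw [le_div_iff₀ hpos]
  exact my_key γ ξ c₀ a b m W W' hW hW0 ha hb hWsq hW'bd hlow u hu

/-! ### The weight for lower bounds valid for every `ξ` -/

theorem W1_deriv (γ : ℝ) : ∀ t : ℝ, HasDerivAt (fun t => -γ * Real.exp (-t))
    (γ * Real.exp (-t)) t := by
  intro t
  have h1 : HasDerivAt (fun t : ℝ => -t) (-1) t := (hasDerivAt_id t).neg
  have h2 := (h1.exp).const_mul (-γ)
  refine h2.congr_deriv ?_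
  ring

theorem rSet_lower_one (γ ξ c₁ : ℝ) (hc₁ : ∀ t ∈ Ioi (0:ℝ), c₁ ≤ (t - ξ)^2) :
    ∀ r ∈ rSet γ ξ, c₁ - (|γ| + γ^2) ≤ r := by
  refine rSet_lower γ ξ _ (γ^2) 0 |γ| _ (fun t => γ * Real.exp (-t)) (W1_deriv γ)
    (by simp) (sq_nonneg γ) le_rfl ?_ ?_ ?_
  · intro t ht
    have h1 : Real.exp (-t) ≤ 1 := Real.exp_le_one_iff.2 (by linarith [ht.out])
    have h2 : (0:ℝ) < Real.exp (-t) := Real.exp_pos _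
    show (-γ * Real.exp (-t))^2 ≤ γ^2 + 0 * t^2
    have h4 : Real.exp (-t)^2 ≤ 1 := by nlinarith
    nlinarith [mul_le_mul_of_nonneg_left h4 (sq_nonneg γ)]
  · intro t ht
    show |γ * Real.exp (-t)| ≤ |γ|
    have h1 : Real.exp (-t) ≤ 1 := Real.exp_le_one_iff.2 (by linarith [ht.out])
    have h2 : (0:ℝ) < Real.exp (-t) := Real.exp_pos _
    rw [abs_mul, Real.abs_exp]
    nlinarith [abs_nonneg γ]
  · intro t ht
    show c₁ - (|γ| + γ^2) ≤ γ * Real.exp (-t) - (-γ * Real.exp (-t))^2 + (t - ξ)^2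
    have h1 : Real.exp (-t) ≤ 1 := Real.exp_le_one_iff.2 (by linarith [ht.out])
    have h2 : (0:ℝ) < Real.exp (-t) := Real.exp_pos _
    have h3 : -|γ| ≤ γ * Real.exp (-t) := by
      nlinarith [neg_abs_le γ, abs_nonneg γ]
    have h4 : Real.exp (-t)^2 ≤ 1 := by nlinarith
    have h5 : (-γ * Real.exp (-t))^2 ≤ γ^2 := by
      have := mul_le_mul_of_nonneg_left h4 (sq_nonneg γ)
      nlinarith
    have h6 := hc₁ t ht
    linarith

theorem rSet_lower_all (γ ξ : ℝ) : ∀ r ∈ rSet γ ξ, -(|γ| + γ^2) ≤ r := by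
  intro r hr
  have := rSet_lower_one γ ξ 0 (fun t _ => sq_nonneg _) r hr
  linarith

theorem rSet_lower_neg (γ ξ : ℝ) (hξ : ξ ≤ 0) :
    ∀ r ∈ rSet γ ξ, ξ^2 - (|γ| + γ^2) ≤ r := by
  refine rSet_lower_one γ ξ _ ?_
  intro t ht
  have ht0 : (0:ℝ) < t := ht.out
  nlinarith

/-! ### The weight for the lower bound near `+∞` -/

theorem W2_deriv (γ ξ : ℝ) : ∀ t : ℝ,
    HasDerivAt (fun t => (t - ξ) + (ξ - γ) * Real.exp (-t))
      (1 - (ξ - γ) * Real.exp (-t)) t := by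
  intro t
  have h1 : HasDerivAt (fun t : ℝ => -t) (-1) t := (hasDerivAt_id t).neg
  have h2 := (h1.exp).const_mul (ξ - γ)
  have h3 := ((hasDerivAt_id t).sub_const ξ).add h2
  refine h3.congr_deriv ?_
  ring

theorem rSet_lower_pos (γ ξ : ℝ) (hξ : 1 + |γ| ≤ ξ) :
    ∀ r ∈ rSet γ ξ,
      1 - (ξ - γ) * (2 + 2*ξ) * Real.exp (-((ξ + γ - 1)/2)) ≤ r := by
  have hγ1 : γ ≤ |γ| := le_abs_self γ
  have hγ2 : -|γ| ≤ γ := neg_abs_le γ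
  have hc : 1 ≤ ξ - γ := by linarith
  have hT0 : 0 ≤ (ξ + γ - 1)/2 := by linarith
  have hξ1 : 1 ≤ ξ := by linarith [abs_nonneg γ]
  refine rSet_lower γ ξ _ (4*ξ^2 + 2*(ξ-γ)^2) 4 (1 + (ξ - γ)) _ _ (W2_deriv γ ξ)
    (by simp; ring) (by positivity) (by norm_num) ?_ ?_ ?_
  · intro t ht
    show ((t - ξ) + (ξ - γ) * Real.exp (-t))^2 ≤ 4*ξ^2 + 2*(ξ-γ)^2 + 4 * t^2
    have h1 : Real.exp (-t) ≤ 1 := Real.exp_le_one_iff.2 (by linarith [ht.out])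
    have h2 : (0:ℝ) < Real.exp (-t) := Real.exp_pos _
    have h4 : Real.exp (-t)^2 ≤ 1 := by nlinarith
    have h5 : ((ξ-γ) * Real.exp (-t))^2 ≤ (ξ-γ)^2 := by
      have := mul_le_mul_of_nonneg_left h4 (sq_nonneg (ξ-γ))
      nlinarith
    nlinarith [sq_nonneg ((t - ξ) - (ξ - γ) * Real.exp (-t)), sq_nonneg (t + ξ)]
  · intro t ht
    show |1 - (ξ - γ) * Real.exp (-t)| ≤ 1 + (ξ - γ)
    have h1 : Real.exp (-t) ≤ 1 := Real.exp_le_one_iff.2 (by linarith [ht.out])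
    have h2 : (0:ℝ) < Real.exp (-t) := Real.exp_pos _
    rw [abs_le]
    constructor
    · nlinarith
    · nlinarith
  · intro t ht
    show 1 - (ξ - γ) * (2 + 2*ξ) * Real.exp (-((ξ + γ - 1)/2))
      ≤ (1 - (ξ - γ) * Real.exp (-t)) - ((t - ξ) + (ξ - γ) * Real.exp (-t))^2 + (t - ξ)^2
    have ht0 : (0:ℝ) < t := ht.out
    have h2 : (0:ℝ) < Real.exp (-t) := Real.exp_pos _
    set c := ξ - γ with hcdef
    set T := (ξ + γ - 1)/2 with hTdef
    have key : c * Real.exp (-t) * (1 + 2*(t - ξ) + c * Real.exp (-t))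
        ≤ c * (2 + 2*ξ) * Real.exp (-T) := by
      have hE : (0:ℝ) < Real.exp (-T) := Real.exp_pos _
      rcases le_or_gt t T with hcase | hcase
      · -- here the bracket is nonpositive
        have h1 : Real.exp (-t) ≤ 1 := Real.exp_le_one_iff.2 (by linarith)
        have hB : 1 + 2*(t - ξ) + c * Real.exp (-t) ≤ 0 := by nlinarith
        have hce : 0 < c * Real.exp (-t) := by positivity
        nlinarith [mul_pos (mul_pos (show (0:ℝ) < c by linarith)
          (show (0:ℝ) < 2 + 2*ξ by linarith)) hE]
      · -- here t > T; use `s * exp (-s) ≤ 1`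
        set s := t - T with hsdef
        have hs : 0 < s := by
          rw [hsdef]; linarith
        have hsplit : Real.exp (-t) = Real.exp (-T) * Real.exp (-s) := by
          rw [← Real.exp_add]; congr 1; rw [hsdef]; ring
        have hse : s * Real.exp (-s) ≤ 1 := by
          have hle := Real.add_one_le_exp s
          have hp : (0:ℝ) < Real.exp s := Real.exp_pos _
          rw [Real.exp_neg, mul_inv_le_iff₀ hp]
          linarith
        have he1 : Real.exp (-s) ≤ 1 := Real.exp_le_one_iff.2 (by linarith)
        have h1 : Real.exp (-t) ≤ 1 := Real.exp_le_one_iff.2 (by linarith)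
        have hbr : 1 + 2*(t - ξ) + c * Real.exp (-t) ≤ 2 * s := by
          have hz : 1 + 2*T + c - 2*ξ = 0 := by rw [hTdef, hcdef]; ring
          have hs2 : t = T + s := by rw [hsdef]; ring
          nlinarith
        have hce : 0 < c * Real.exp (-t) := by positivity
        calc c * Real.exp (-t) * (1 + 2*(t - ξ) + c * Real.exp (-t))
            ≤ c * Real.exp (-t) * (2 * s) := by nlinarith
          _ = 2 * c * (s * Real.exp (-s)) * Real.exp (-T) := by rw [hsplit]; ring
          _ ≤ 2 * c * 1 * Real.exp (-T) := by
              have h2c : (0:ℝ) < 2 * c := by linarith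
              nlinarith [mul_le_mul_of_nonneg_left hse (le_of_lt h2c)]
          _ ≤ c * (2 + 2*ξ) * Real.exp (-T) := by
              nlinarith [mul_nonneg (mul_nonneg (show (0:ℝ) ≤ 2*ξ by linarith)
                (show (0:ℝ) ≤ c by linarith)) hE.le]
    nlinarith [key]

/-! ### The Gaussian trial function -/

noncomputable def gaussR (ξ : ℝ) : ℝ → ℝ := fun t => Real.exp (-((t - ξ)^2) / 2)

noncomputable def gaussC (ξ : ℝ) : ℝ → ℂ := fun t => ((gaussR ξ t : ℝ) : ℂ)

theorem gaussR_pos (ξ t : ℝ) : 0 < gaussR ξ t := Real.exp_pos _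

theorem gaussR_hasDeriv (ξ t : ℝ) :
    HasDerivAt (gaussR ξ) (-(t - ξ) * gaussR ξ t) t := by
  have h1 : HasDerivAt (fun t : ℝ => -((t - ξ)^2) / 2) (-(t - ξ)) t := by
    have := (((hasDerivAt_id t).sub_const ξ).pow 2).neg.div_const 2
    refine this.congr_deriv ?_
    simp only [id_eq, pow_one, Nat.cast_ofNat]
    ring
  have := h1.exp
  refine this.congr_deriv ?_
  simp only [gaussR]
  ring

theorem gaussC_hasDeriv (ξ t : ℝ) :
    HasDerivAt (gaussC ξ) (((-(t - ξ) * gaussR ξ t : ℝ) : ℂ)) t :=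
  (gaussR_hasDeriv ξ t).ofReal_comp

theorem gaussC_deriv (ξ : ℝ) :
    deriv (gaussC ξ) = fun t => ((-(t - ξ) * gaussR ξ t : ℝ) : ℂ) :=
  funext fun t => (gaussC_hasDeriv ξ t).deriv

theorem gaussR_sq (ξ t : ℝ) : gaussR ξ t ^ 2 = Real.exp (-((t - ξ)^2)) := by
  rw [show gaussR ξ t = Real.exp (-((t - ξ)^2) / 2) from rfl, pow_two, ← Real.exp_add]
  congr 1
  ring

theorem norm_gaussC_sq (ξ t : ℝ) : ‖gaussC ξ t‖^2 = Real.exp (-((t - ξ)^2)) := by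
  rw [gaussC, Complex.norm_real, Real.norm_eq_abs, sq_abs, gaussR_sq]

theorem norm_deriv_gaussC_sq (ξ t : ℝ) :
    ‖deriv (gaussC ξ) t‖^2 = (t - ξ)^2 * Real.exp (-((t - ξ)^2)) := by
  rw [gaussC_deriv]
  simp only [Complex.norm_real, Real.norm_eq_abs]
  rw [abs_mul, mul_pow, sq_abs, sq_abs, gaussR_sq, neg_pow]
  ring

theorem cont_exp_gauss (ξ : ℝ) : Continuous fun t : ℝ => Real.exp (-((t - ξ)^2)) :=
  (((continuous_id.sub continuous_const).pow 2).neg).rexp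

theorem cont_E2 (ξ : ℝ) : Continuous fun t : ℝ => Real.exp (-(1/2 : ℝ) * (t - ξ)^2) :=
  (continuous_const.mul ((continuous_id.sub continuous_const).pow 2)).rexp

theorem exp_gauss_integrable (ξ : ℝ) :
    Integrable (fun t : ℝ => Real.exp (-((t - ξ)^2))) volume := by
  have h := (integrable_exp_neg_mul_sq one_pos).comp_sub_right ξ
  simpa using h

theorem E2_integrable (ξ : ℝ) :
    Integrable (fun t : ℝ => Real.exp (-(1/2 : ℝ) * (t - ξ)^2)) volume := by
  have h := (integrable_exp_neg_mul_sq (by norm_num : (0:ℝ) < 1/2)).comp_sub_right ξ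
  simpa using h

theorem exp_sq_bound (x : ℝ) : x^2 * Real.exp (-(x^2)) ≤ 2 * Real.exp (-(1/2 : ℝ) * x^2) := by
  have h1 : (1/2 : ℝ) * x^2 + 1 ≤ Real.exp ((1/2 : ℝ) * x^2) := Real.add_one_le_exp _
  have h2 : Real.exp (-(1/2 : ℝ) * x^2) * Real.exp ((1/2 : ℝ) * x^2) = 1 := by
    rw [← Real.exp_add]; simp
  have h3 : (0:ℝ) < Real.exp (-(1/2 : ℝ) * x^2) := Real.exp_pos _
  have h4 : Real.exp (-(x^2)) = Real.exp (-(1/2 : ℝ) * x^2) * Real.exp (-(1/2 : ℝ) * x^2) := by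
    rw [← Real.exp_add]; congr 1; ring
  have h5 : x^2 * Real.exp (-(1/2 : ℝ) * x^2) ≤ 2 := by nlinarith
  nlinarith

theorem sq_exp_gauss_integrableOn (ξ : ℝ) :
    IntegrableOn (fun t : ℝ => (t - ξ)^2 * Real.exp (-((t - ξ)^2))) (Ioi 0) volume := by
  refine my_dom _ (fun t => 2 * Real.exp (-(1/2 : ℝ) * (t - ξ)^2))
    ((E2_integrable ξ).const_mul 2).integrableOn
    (Continuous.aestronglyMeasurable (((continuous_id.sub continuous_const).pow 2).mul
      (cont_exp_gauss ξ))) fun t ht => ?_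
  rw [abs_of_nonneg (by positivity)]
  exact exp_sq_bound (t - ξ)

theorem gauss_memB1Half (ξ : ℝ) : MemB1Half (gaussC ξ) := by
  refine ⟨fun t => (gaussC_hasDeriv ξ t).differentiableAt, ?_, ?_, ?_⟩
  · have hfun : (fun t => ‖gaussC ξ t‖^2) = fun t => Real.exp (-((t - ξ)^2)) :=
      funext (norm_gaussC_sq ξ)
    rw [hfun]
    exact (exp_gauss_integrable ξ).integrableOn
  · have hfun : (fun t => ‖deriv (gaussC ξ) t‖^2)
        = fun t => (t - ξ)^2 * Real.exp (-((t - ξ)^2)) := funext (norm_deriv_gaussC_sq ξ)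
    rw [hfun]
    exact sq_exp_gauss_integrableOn ξ
  · have hfun : (fun t => t^2 * ‖gaussC ξ t‖^2)
        = fun t => t^2 * Real.exp (-((t - ξ)^2)) := by
      funext t; rw [norm_gaussC_sq]
    rw [hfun]
    have hI : IntegrableOn (fun t => 4 * Real.exp (-(1/2 : ℝ) * (t - ξ)^2)
        + 2*ξ^2 * Real.exp (-(1/2 : ℝ) * (t - ξ)^2)) (Ioi 0) volume :=
      (((E2_integrable ξ).const_mul 4).add
        ((E2_integrable ξ).const_mul (2*ξ^2))).integrableOn
    refine my_dom _ _ hI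
      (Continuous.aestronglyMeasurable ((continuous_pow 2).mul (cont_exp_gauss ξ)))
      fun t ht => ?_
    rw [abs_of_nonneg (by positivity)]
    have h1 := exp_sq_bound (t - ξ)
    have h2 : Real.exp (-((t - ξ)^2)) ≤ Real.exp (-(1/2 : ℝ) * (t - ξ)^2) := by
      apply Real.exp_le_exp.2; nlinarith [sq_nonneg (t - ξ)]
    have h3 : (0:ℝ) < Real.exp (-((t - ξ)^2)) := Real.exp_pos _
    nlinarith [sq_nonneg (t - 2*ξ), mul_le_mul_of_nonneg_left h2 (show (0:ℝ) ≤ 2*ξ^2 by positivity),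
      mul_nonneg (sq_nonneg (t - 2*ξ)) h3.le]

theorem gauss_den_pos (ξ : ℝ) : 0 < ∫ t in Ioi (0:ℝ), ‖gaussC ξ t‖^2 := by
  have hfun : (fun t => ‖gaussC ξ t‖^2) = fun t => Real.exp (-((t - ξ)^2)) :=
    funext (norm_gaussC_sq ξ)
  rw [hfun]
  rw [setIntegral_pos_iff_support_of_nonneg_ae
    (ae_of_all _ fun t => (Real.exp_pos _).le) (exp_gauss_integrable ξ).integrableOn]
  have hsupp : (Function.support fun t => Real.exp (-((t - ξ)^2))) = univ := by
    ext t; simp [Function.mem_support, (Real.exp_pos _).ne']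
  rw [hsupp, univ_inter]
  simp [Real.volume_Ioi]

theorem gauss_identity (ξ : ℝ) :
    2 * ∫ t in Ioi (0:ℝ), (t - ξ)^2 * Real.exp (-((t - ξ)^2))
      = (∫ t in Ioi (0:ℝ), Real.exp (-((t - ξ)^2))) - ξ * Real.exp (-(ξ^2)) := by
  have hd : ∀ t : ℝ, HasDerivAt (fun t : ℝ => -((t - ξ) * Real.exp (-((t - ξ)^2))) / 2)
      ((t - ξ)^2 * Real.exp (-((t - ξ)^2)) - Real.exp (-((t - ξ)^2)) / 2) t := by
    intro t
    have hinner : HasDerivAt (fun t : ℝ => -((t - ξ)^2)) (-(2*(t - ξ))) t := by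
      have := (((hasDerivAt_id t).sub_const ξ).pow 2).neg
      refine this.congr_deriv ?_
      simp only [id_eq, pow_one, Nat.cast_ofNat]
      ring
    have hexp := hinner.exp
    have hmul := ((hasDerivAt_id t).sub_const ξ).mul hexp
    have := (hmul.neg).div_const 2
    refine this.congr_deriv ?_
    simp only [id_eq]
    ring
  have hint : IntegrableOn (fun t : ℝ => -((t - ξ) * Real.exp (-((t - ξ)^2))) / 2)
      (Ioi 0) volume := by
    refine my_dom _ (fun t => 2 * Real.exp (-(1/2 : ℝ) * (t - ξ)^2))
      ((E2_integrable ξ).const_mul 2).integrableOn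
      (Continuous.aestronglyMeasurable ((((continuous_id.sub continuous_const).mul
        (cont_exp_gauss ξ)).neg).div_const 2)) fun t ht => ?_
    have h3 : (0:ℝ) < Real.exp (-((t - ξ)^2)) := Real.exp_pos _
    rw [abs_div, abs_neg, abs_mul, Real.abs_exp, abs_of_nonneg (by norm_num : (0:ℝ) ≤ 2)]
    have habs : |t - ξ| * Real.exp (-((t - ξ)^2)) ≤ 4 * Real.exp (-(1/2:ℝ) * (t - ξ)^2) := by
      have hb := exp_sq_bound (t - ξ)
      have h4 : (0:ℝ) < Real.exp (-(1/2 : ℝ) * (t - ξ)^2) := Real.exp_pos _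
      have h2 : Real.exp (-((t - ξ)^2)) ≤ Real.exp (-(1/2 : ℝ) * (t - ξ)^2) := by
        apply Real.exp_le_exp.2; nlinarith [sq_nonneg (t - ξ)]
      rcases le_or_gt |t - ξ| 1 with hc | hc
      · nlinarith [abs_nonneg (t - ξ)]
      · have h5 : |t - ξ| ≤ (t - ξ)^2 := by nlinarith [abs_nonneg (t - ξ), sq_abs (t - ξ)]
        nlinarith
    linarith
  have hint' : IntegrableOn (fun t : ℝ => (t - ξ)^2 * Real.exp (-((t - ξ)^2))
      - Real.exp (-((t - ξ)^2)) / 2) (Ioi 0) volume :=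
    (sq_exp_gauss_integrableOn ξ).sub ((exp_gauss_integrable ξ).integrableOn.div_const 2)
  have hFTC := my_integral_deriv_Ioi _ _ hd hint hint'
  have hsub : ∫ t in Ioi (0:ℝ), ((t - ξ)^2 * Real.exp (-((t - ξ)^2))
      - Real.exp (-((t - ξ)^2)) / 2)
      = (∫ t in Ioi (0:ℝ), (t - ξ)^2 * Real.exp (-((t - ξ)^2)))
        - ∫ t in Ioi (0:ℝ), Real.exp (-((t - ξ)^2)) / 2 :=
    integral_sub (sq_exp_gauss_integrableOn ξ)
      ((exp_gauss_integrable ξ).integrableOn.div_const 2)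
  have hdiv : ∫ t in Ioi (0:ℝ), Real.exp (-((t - ξ)^2)) / 2
      = (∫ t in Ioi (0:ℝ), Real.exp (-((t - ξ)^2))) / 2 :=
    integral_div 2 _
  have hh0 : -((((0:ℝ) - ξ) * Real.exp (-(((0:ℝ) - ξ)^2))) ) / 2
      = ξ * Real.exp (-(ξ^2)) / 2 := by
    rw [show ((0:ℝ) - ξ) = -ξ by ring, neg_sq]
    ring
  rw [hsub, hdiv, hh0] at hFTC
  linarith

theorem gauss_quotient_mem (γ ξ : ℝ) :
    ∃ r ∈ rSet γ ξ, (1 + |γ| ≤ ξ → r ≤ 1) := by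
  set u := gaussC ξ with hudef
  have hden := gauss_den_pos ξ
  refine ⟨_, ⟨u, gauss_memB1Half ξ, hden, rfl⟩, ?_⟩
  intro hξ
  rw [div_le_one hden]
  have hnum : ∫ t in Ioi (0:ℝ), (‖deriv u t‖ ^ 2 + (t - ξ) ^ 2 * ‖u t‖ ^ 2)
      = 2 * ∫ t in Ioi (0:ℝ), (t - ξ)^2 * Real.exp (-((t - ξ)^2)) := by
    rw [← integral_const_mul]
    congr 1
    funext t
    rw [hudef, norm_deriv_gaussC_sq, norm_gaussC_sq]
    ring
  have hden' : (∫ t in Ioi (0:ℝ), ‖u t‖^2) = ∫ t in Ioi (0:ℝ), Real.exp (-((t - ξ)^2)) := by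
    congr 1
    funext t
    rw [hudef, norm_gaussC_sq]
  have hu0 : ‖u 0‖^2 = Real.exp (-(ξ^2)) := by
    rw [hudef, norm_gaussC_sq]
    congr 2
    ring
  rw [hnum, hden', hu0, gauss_identity ξ]
  have hγξ : γ ≤ ξ := by
    have := le_abs_self γ
    linarith [abs_nonneg γ]
  nlinarith [Real.exp_pos (-(ξ^2))]

/-! ### Tendsto of the error term -/

theorem eps_tendsto (γ : ℝ) :
    Tendsto (fun ξ => (ξ - γ) * (2 + 2*ξ) * Real.exp (-((ξ + γ - 1)/2))) atTop (𝓝 0) := by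
  have hL : Tendsto (fun ξ : ℝ => (ξ + γ - 1)/2) atTop atTop := by
    have base : Tendsto (fun ξ : ℝ => (ξ + (γ - 1))/2) atTop atTop :=
      (tendsto_atTop_add_const_right atTop (γ - 1) tendsto_id).atTop_div_const (by norm_num)
    exact base.congr fun ξ => by ring
  have h0 := Real.tendsto_pow_mul_exp_neg_atTop_nhds_zero 0
  have h1 := Real.tendsto_pow_mul_exp_neg_atTop_nhds_zero 1
  have h2 := Real.tendsto_pow_mul_exp_neg_atTop_nhds_zero 2
  have hP : Tendsto (fun y : ℝ => (2*y + 1 - 2*γ) * (4*y + 4 - 2*γ) * Real.exp (-y))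
      atTop (𝓝 0) := by
    have hfun : (fun y : ℝ => (2*y + 1 - 2*γ) * (4*y + 4 - 2*γ) * Real.exp (-y))
        = fun y => 8*(y^2 * Real.exp (-y)) + (12 - 12*γ)*(y^1 * Real.exp (-y))
          + ((1 - 2*γ)*(4 - 2*γ))*(y^0 * Real.exp (-y)) := by
      funext y; ring
    rw [hfun]
    have := ((h2.const_mul 8).add (h1.const_mul (12 - 12*γ))).add
      (h0.const_mul ((1 - 2*γ)*(4 - 2*γ)))
    simpa using this
  have hcomp := hP.comp hL
  refine hcomp.congr fun ξ => ?_
  simp only [Function.comp_apply]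
  ring

/-! ### Lower/upper bounds for `robinMu` -/

theorem robinMu_bddBelow (γ ξ : ℝ) : BddBelow (rSet γ ξ) :=
  ⟨-(|γ| + γ^2), fun r hr => rSet_lower_all γ ξ r hr⟩

theorem robinMu_nonempty (γ ξ : ℝ) : (rSet γ ξ).Nonempty := by
  obtain ⟨r, hr, -⟩ := gauss_quotient_mem γ ξ
  exact ⟨r, hr⟩

theorem robinMu_ge_neg (γ ξ : ℝ) (hξ : ξ ≤ 0) : ξ^2 - (|γ| + γ^2) ≤ robinMu γ ξ := by
  rw [robinMu_eq]
  exact le_csInf (robinMu_nonempty γ ξ) (rSet_lower_neg γ ξ hξ)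

theorem robinMu_ge_pos (γ ξ : ℝ) (hξ : 1 + |γ| ≤ ξ) :
    1 - (ξ - γ) * (2 + 2*ξ) * Real.exp (-((ξ + γ - 1)/2)) ≤ robinMu γ ξ := by
  rw [robinMu_eq]
  exact le_csInf (robinMu_nonempty γ ξ) (rSet_lower_pos γ ξ hξ)

theorem robinMu_le_one (γ ξ : ℝ) (hξ : 1 + |γ| ≤ ξ) : robinMu γ ξ ≤ 1 := by
  obtain ⟨r, hr, hle⟩ := gauss_quotient_mem γ ξ
  rw [robinMu_eq]
  exact le_trans (csInf_le (robinMu_bddBelow γ ξ) hr) (hle hξ)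

end RobinAux

open RobinAux

/-- For every `γ ∈ ℝ`, `μ(γ,ξ) → +∞` as `ξ → -∞` and `μ(γ,ξ) → 1` as `ξ → +∞`. -/
theorem robinMu_limits (γ : ℝ) :
    Tendsto (fun ξ => robinMu γ ξ) atBot atTop ∧
    Tendsto (fun ξ => robinMu γ ξ) atTop (nhds 1) := by
  constructor
  · -- at -∞
    have hbase : Tendsto (fun ξ : ℝ => ξ^2 - (|γ| + γ^2)) atBot atTop := by
      apply tendsto_atTop_add_const_right
      have h1 : Tendsto (fun x : ℝ => x ^ 2) atTop atTop :=
        tendsto_pow_atTop (two_ne_zero)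
      have h := h1.comp tendsto_neg_atBot_atTop
      exact h.congr fun x => by simp [Function.comp_apply]
    refine tendsto_atTop_mono' atBot ?_ hbase
    filter_upwards [eventually_le_atBot (0:ℝ)] with ξ hξ
    exact robinMu_ge_neg γ ξ hξ
  · -- at +∞
    have hup : ∀ᶠ ξ in atTop, robinMu γ ξ ≤ 1 := by
      filter_upwards [eventually_ge_atTop (1 + |γ|)] with ξ hξ
      exact robinMu_le_one γ ξ hξ
    have hlo : ∀ᶠ ξ in atTop,
        1 - (ξ - γ) * (2 + 2*ξ) * Real.exp (-((ξ + γ - 1)/2)) ≤ robinMu γ ξ := by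
      filter_upwards [eventually_ge_atTop (1 + |γ|)] with ξ hξ
      exact robinMu_ge_pos γ ξ hξ
    have hglim : Tendsto (fun ξ : ℝ =>
        1 - (ξ - γ) * (2 + 2*ξ) * Real.exp (-((ξ + γ - 1)/2))) atTop (𝓝 1) := by
      have := (tendsto_const_nhds (x := (1:ℝ)) (f := atTop)).sub (eps_tendsto γ)
      simpa using this
    exact tendsto_of_tendsto_of_tendsto_of_le_of_le' hglim tendsto_const_nhds hlo hup
end

section
/- There exist constants C₀ > 0 and γ₀ > 0 such that for all γ ≥ γ₀, Θ(γ) ≥ 1 − C₀ γ e^{−γ²}. -/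
open MeasureTheory Set Filter Topology

lemma normsq_complex (z : ℂ) : ‖z‖^2 = z.re^2 + z.im^2 := by
  rw [← Complex.normSq_eq_norm_sq, Complex.normSq_apply]; ring

lemma hasDerivAt_norm_sq {u : ℝ → ℂ} (hu : Differentiable ℝ u) (t : ℝ) :
    HasDerivAt (fun s => ‖u s‖^2) (2 * ((starRingEnd ℂ) (u t) * deriv u t).re) t := by
  have h := (hu t).hasDerivAt
  have hre : HasDerivAt (fun s => (u s).re) ((deriv u t).re) t :=
    (Complex.reCLM.hasFDerivAt.comp_hasDerivAt t h : )
  have him : HasDerivAt (fun s => (u s).im) ((deriv u t).im) t :=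
    (Complex.imCLM.hasFDerivAt.comp_hasDerivAt t h : )
  have h2 : HasDerivAt (fun s => (u s).re^2 + (u s).im^2)
      (2*(u t).re*(deriv u t).re + 2*(u t).im*(deriv u t).im) t := by
    have := ((hre.fun_pow 2).fun_add (him.fun_pow 2))
    refine this.congr_deriv ?_
    ring
  have heq : (fun s => ‖u s‖^2) = (fun s => (u s).re^2 + (u s).im^2) := by
    funext s; exact normsq_complex _
  rw [heq]
  convert h2 using 1
  simp [Complex.mul_re]
  ring

lemma cs_aux {A B K : ℝ} (hI : 0 < A) (hJ : 0 ≤ B) (hK : 0 ≤ K)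
    (h : ∀ c : ℝ, 0 < c → 2*K ≤ c*A + B/c) : K^2 ≤ A*B := by
  rcases eq_or_lt_of_le hJ with hJ0 | hJpos
  · rcases eq_or_lt_of_le hK with hK0 | hKpos
    · nlinarith
    · exfalso
      have h2 := h (K/A) (by positivity)
      rw [← hJ0] at h2
      have hKI : K/A * A = K := by field_simp
      rw [hKI] at h2
      simp only [zero_div] at h2
      linarith
  · set s := Real.sqrt (B/A) with hs_def
    have hc : 0 < s := Real.sqrt_pos.2 (by positivity)
    have hsq : s^2 = B/A := Real.sq_sqrt (by positivity)
    have hJeq : B = s^2 * A := by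
      rw [hsq]; field_simp
    have h2 := h s hc
    have hJs : B/s = s*A := by
      rw [hJeq]; field_simp
    rw [hJs] at h2
    have hK' : K ≤ s*A := by linarith
    calc K^2 ≤ (s*A)^2 := by nlinarith
      _ = s^2 * A^2 := by ring
      _ = A*B := by rw [hsq]; field_simp

lemma key_exp {γ x : ℝ} (hγ : 1 ≤ γ) (hx : 0 ≤ x) :
    2*x*Real.exp (1 - γ^2 - 2*γ*x) ≤ Real.exp (-γ^2)/γ := by
  have hγ0 : 0 < γ := by linarith
  have h1 : Real.exp (1 - γ^2 - 2*γ*x) = Real.exp (-γ^2) * Real.exp (1 - 2*γ*x) := by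
    rw [← Real.exp_add]; ring_nf
  rw [h1]
  have key : γ * (2*x*Real.exp (1 - 2*γ*x)) ≤ 1 := by
    have h2 : 2*γ*x ≤ Real.exp (2*γ*x - 1) := by
      have := Real.add_one_le_exp (2*γ*x - 1)
      linarith
    have h3 := mul_le_mul_of_nonneg_right h2 (Real.exp_nonneg (1 - 2*γ*x))
    rw [← Real.exp_add] at h3
    simp only [show 2*γ*x - 1 + (1 - 2*γ*x) = 0 by ring, Real.exp_zero] at h3
    nlinarith [Real.exp_nonneg (1 - 2*γ*x)]
  calc 2*x*(Real.exp (-γ^2) * Real.exp (1 - 2*γ*x))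
      = Real.exp (-γ^2) * (2*x*Real.exp (1 - 2*γ*x)) := by ring
    _ ≤ Real.exp (-γ^2) * (1/γ) := by
        apply mul_le_mul_of_nonneg_left _ (Real.exp_nonneg _)
        rw [le_div_iff₀ hγ0]
        linarith
    _ = Real.exp (-γ^2)/γ := by ring

set_option maxHeartbeats 8000000 in
lemma quad_lower {γ ξ : ℝ} (hγ : 2 ≤ γ) {u : ℝ → ℂ} (hu : MemB1Half u) :
    (1 - γ * Real.exp (-γ^2)) * (∫ t in Ioi (0:ℝ), ‖u t‖ ^ 2) ≤
      (∫ t in Ioi (0:ℝ), (‖deriv u t‖ ^ 2 + (t - ξ) ^ 2 * ‖u t‖ ^ 2)) + γ * ‖u 0‖ ^ 2 := by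
  obtain ⟨hdiff, hgI, hdI, htI⟩ := hu
  have hcu : Continuous u := hdiff.continuous
  have hgc : Continuous (fun t : ℝ => ‖u t‖^2) := (hcu.norm).pow 2
  have hmdu : Measurable (deriv u) := measurable_deriv u
  have hmv : Measurable (fun t : ℝ => deriv u t + (t - ξ) • u t) :=
    hmdu.add ((measurable_id.sub_const ξ).smul hcu.measurable)
  have hgd := hasDerivAt_norm_sq hdiff
  have hmgd : Measurable (fun t : ℝ => 2 * ((starRingEnd ℂ) (u t) * deriv u t).re) :=
    ((Complex.measurable_re.comp
      (((Complex.continuous_conj.comp hcu).measurable).mul hmdu))).const_mul 2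
  -- pointwise bound on gd
  have hgd_bd : ∀ t : ℝ, |2 * ((starRingEnd ℂ) (u t) * deriv u t).re| ≤
      2 * ‖u t‖ * ‖deriv u t‖ := by
    intro t
    have h1 : |((starRingEnd ℂ) (u t) * deriv u t).re| ≤ ‖(starRingEnd ℂ) (u t) * deriv u t‖ :=
      Complex.abs_re_le_norm _
    have h2 : ‖(starRingEnd ℂ) (u t) * deriv u t‖ = ‖u t‖ * ‖deriv u t‖ := by
      rw [norm_mul, RCLike.norm_conj]
    rw [abs_mul, abs_two]
    calc 2 * |((starRingEnd ℂ) (u t) * deriv u t).re| ≤ 2 * (‖u t‖ * ‖deriv u t‖) := by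
          rw [← h2]; linarith
      _ = 2 * ‖u t‖ * ‖deriv u t‖ := by ring
  -- integrabilities
  have hPI : IntegrableOn (fun t : ℝ => (t-ξ)^2 * ‖u t‖^2) (Ioi 0) volume := by
    apply Integrable.mono' (g := fun t => 2*(t^2*‖u t‖^2) + (2*ξ^2)*(‖u t‖^2))
    · exact (htI.const_mul 2).add (hgI.const_mul (2*ξ^2))
    · exact ((((continuous_id.sub continuous_const).pow 2).mul hgc)).aestronglyMeasurable
    · filter_upwards with t
      rw [Real.norm_eq_abs, abs_of_nonneg (by positivity)]
      nlinarith [sq_nonneg (‖u t‖), sq_nonneg (t + ξ), sq_nonneg (t - ξ), sq_nonneg ξ, sq_nonneg t, mul_nonneg (sq_nonneg (t+ξ)) (sq_nonneg (‖u t‖))]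
  have hVI : IntegrableOn (fun t : ℝ => ‖deriv u t + (t-ξ) • u t‖^2) (Ioi 0) volume := by
    apply Integrable.mono' (g := fun t => 2*(‖deriv u t‖^2) + 2*((t-ξ)^2 * ‖u t‖^2))
    · exact (hdI.const_mul 2).add (hPI.const_mul 2)
    · exact ((hmv.norm.pow_const 2)).aestronglyMeasurable
    · filter_upwards with t
      rw [Real.norm_eq_abs, abs_of_nonneg (by positivity)]
      have h1 : ‖deriv u t + (t-ξ) • u t‖ ≤ ‖deriv u t‖ + ‖(t-ξ) • u t‖ := norm_add_le _ _
      have h2 : ‖(t-ξ) • u t‖ = |t-ξ| * ‖u t‖ := by rw [norm_smul, Real.norm_eq_abs]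
      have h3 : (|t-ξ| * ‖u t‖)^2 = (t-ξ)^2 * ‖u t‖^2 := by rw [mul_pow, sq_abs]
      nlinarith [norm_nonneg (deriv u t), norm_nonneg ((t-ξ) • u t), norm_nonneg (deriv u t + (t-ξ) • u t), sq_nonneg (‖deriv u t‖ - ‖(t-ξ) • u t‖)]
  have hcrossI : IntegrableOn
      (fun t : ℝ => (t-ξ) * (2 * ((starRingEnd ℂ) (u t) * deriv u t).re)) (Ioi 0) volume := by
    apply Integrable.mono' (g := fun t => ‖deriv u t‖^2 + (t-ξ)^2 * ‖u t‖^2)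
    · exact hdI.add hPI
    · exact ((measurable_id.sub_const ξ).mul hmgd).aestronglyMeasurable
    · filter_upwards with t
      rw [Real.norm_eq_abs, abs_mul]
      have := hgd_bd t
      have h4 : |t - ξ| * |2 * ((starRingEnd ℂ) (u t) * deriv u t).re| ≤
          |t-ξ| * (2 * ‖u t‖ * ‖deriv u t‖) :=
        mul_le_mul_of_nonneg_left this (abs_nonneg _)
      have h5 : |t-ξ| * (2 * ‖u t‖ * ‖deriv u t‖) ≤ ‖deriv u t‖^2 + (t-ξ)^2 * ‖u t‖^2 := by
        nlinarith [sq_nonneg (|t-ξ| * ‖u t‖ - ‖deriv u t‖), sq_abs (t-ξ), abs_nonneg (t-ξ), norm_nonneg (u t), norm_nonneg (deriv u t)]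
      linarith
  have htgI : IntegrableOn (fun t : ℝ => t * ‖u t‖^2) (Ioi 0) volume := by
    apply Integrable.mono' (g := fun t => (1/2)*(‖u t‖^2) + (1/2)*(t^2*‖u t‖^2))
    · exact (hgI.const_mul _).add (htI.const_mul _)
    · exact (measurable_id.mul hgc.measurable).aestronglyMeasurable
    · filter_upwards with t
      rw [Real.norm_eq_abs, abs_mul, abs_of_nonneg (sq_nonneg ‖u t‖)]
      nlinarith [sq_nonneg (|t| - 1), sq_abs t, abs_nonneg t, sq_nonneg (‖u t‖), mul_nonneg (sq_nonneg (|t|-1)) (sq_nonneg (‖u t‖))]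
  -- pointwise expansion
  have hpt : ∀ t : ℝ, ‖deriv u t + (t-ξ) • u t‖^2 =
      ‖deriv u t‖^2 + (t-ξ)^2 * ‖u t‖^2 +
      (t-ξ) * (2 * ((starRingEnd ℂ) (u t) * deriv u t).re) := by
    intro t
    simp only [normsq_complex, Complex.real_smul, Complex.add_re, Complex.add_im,
      Complex.mul_re, Complex.mul_im, Complex.ofReal_re, Complex.ofReal_im,
      Complex.conj_re, Complex.conj_im]
    ring
  -- FTC identity on [0,T]
  have hFTC : ∀ T : ℝ, 0 ≤ T →
      (∫ t in (0:ℝ)..T, (‖u t‖^2 + (t-ξ) * (2 * ((starRingEnd ℂ) (u t) * deriv u t).re)))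
        = (T-ξ)*‖u T‖^2 + ξ*‖u 0‖^2 := by
    intro T hT
    have hder : ∀ t ∈ uIcc (0:ℝ) T, HasDerivAt (fun t => (t-ξ)*‖u t‖^2)
        (‖u t‖^2 + (t-ξ) * (2 * ((starRingEnd ℂ) (u t) * deriv u t).re)) t := by
      intro t _
      have h := ((hasDerivAt_id t).sub_const ξ).fun_mul (hgd t)
      refine h.congr_deriv ?_
      simp only [id_eq]
      ring
    have hint : IntervalIntegrable
        (fun t => ‖u t‖^2 + (t-ξ) * (2 * ((starRingEnd ℂ) (u t) * deriv u t).re))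
        volume 0 T := by
      apply IntervalIntegrable.add
      · exact hgc.intervalIntegrable 0 T
      · rw [intervalIntegrable_iff_integrableOn_Ioc_of_le hT]
        exact hcrossI.mono_set Ioc_subset_Ioi_self
    have h := intervalIntegral.integral_eq_sub_of_hasDerivAt hder hint
    rw [h]
    ring
  -- limits
  set D : ℝ := ∫ t in Ioi (0:ℝ), (t-ξ) * (2 * ((starRingEnd ℂ) (u t) * deriv u t).re) with hD_def
  set N : ℝ := ∫ t in Ioi (0:ℝ), ‖u t‖^2 with hN_def
  have hNDlim : Tendsto (fun T : ℝ =>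
      ∫ t in (0:ℝ)..T, (‖u t‖^2 + (t-ξ) * (2 * ((starRingEnd ℂ) (u t) * deriv u t).re)))
      atTop (𝓝 (N + D)) := by
    have := MeasureTheory.intervalIntegral_tendsto_integral_Ioi (μ := volume)
      (b := fun T : ℝ => T) 0 (hgI.add hcrossI) tendsto_id
    convert this using 2
    simp only [Pi.add_apply]
    exact (MeasureTheory.integral_add hgI hcrossI).symm
  set L : ℝ := N + D - ξ*‖u 0‖^2 with hL_def
  have hLlim : Tendsto (fun T : ℝ => (T-ξ)*‖u T‖^2) atTop (𝓝 L) := by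
    have h1 := hNDlim.sub_const (ξ*‖u 0‖^2)
    apply h1.congr'
    filter_upwards [eventually_ge_atTop (0:ℝ)] with T hT
    rw [hFTC T hT]
    ring
  have hgT0 : Tendsto (fun T : ℝ => ‖u T‖^2) atTop (𝓝 0) := by
    have h2 : Tendsto (fun T : ℝ => (T - ξ)⁻¹) atTop (𝓝 0) := by
      apply Filter.Tendsto.inv_tendsto_atTop
      exact tendsto_atTop_add_const_right atTop (-ξ) tendsto_id
    have h3 := hLlim.mul h2
    rw [mul_zero] at h3
    apply h3.congr'
    filter_upwards [eventually_gt_atTop (ξ+1)] with T hT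
    have hne : T - ξ ≠ 0 := sub_ne_zero.2 (by linarith)
    field_simp
  have hTgT : Tendsto (fun T : ℝ => T*‖u T‖^2) atTop (𝓝 L) := by
    have h4 := hLlim.add (hgT0.const_mul ξ)
    simp only [mul_zero, add_zero] at h4
    apply h4.congr
    intro T
    ring
  have hL0 : L = 0 := by
    have hLge : 0 ≤ L := by
      apply ge_of_tendsto hTgT
      filter_upwards [eventually_ge_atTop (0:ℝ)] with T hT
      positivity
    by_contra hne
    have hLpos : 0 < L := lt_of_le_of_ne hLge (Ne.symm hne)
    have hev : ∀ᶠ T in atTop, L/2 < T*‖u T‖^2 :=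
      hTgT.eventually (eventually_gt_nhds (by linarith))
    obtain ⟨M, hM⟩ := eventually_atTop.1 hev
    have hsub : Ioi (max M 0) ⊆ Ioi (0:ℝ) := Ioi_subset_Ioi (le_max_right M 0)
    have hconst : IntegrableOn (fun _ : ℝ => L/2) (Ioi (max M 0)) volume := by
      apply Integrable.mono' (htgI.mono_set hsub) aestronglyMeasurable_const
      rw [ae_restrict_iff' measurableSet_Ioi]
      filter_upwards with t ht
      rw [Real.norm_eq_abs, abs_of_nonneg (by linarith : (0:ℝ) ≤ L/2)]
      exact (hM t (le_trans (le_max_left M 0) (le_of_lt ht))).le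
    rw [integrableOn_const_iff] at hconst
    rcases hconst with h | h
    · simp at h; linarith
    · rw [Real.volume_Ioi] at h
      exact (lt_irrefl _ h).elim
  -- main identity
  have hident : (∫ t in Ioi (0:ℝ), ‖deriv u t + (t-ξ) • u t‖^2)
      = (∫ t in Ioi (0:ℝ), ‖deriv u t‖^2) + (∫ t in Ioi (0:ℝ), (t-ξ)^2*‖u t‖^2)
        + ξ*‖u 0‖^2 - N := by
    have e1 : (∫ t in Ioi (0:ℝ), ‖deriv u t + (t-ξ) • u t‖^2)
        = ∫ t in Ioi (0:ℝ), (‖deriv u t‖^2 + (t-ξ)^2*‖u t‖^2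
            + (t-ξ) * (2 * ((starRingEnd ℂ) (u t) * deriv u t).re)) :=
      MeasureTheory.setIntegral_congr_fun measurableSet_Ioi (fun t _ => hpt t)
    have hsplit : (∫ t in Ioi (0:ℝ), ‖deriv u t + (t-ξ) • u t‖^2)
        = (∫ t in Ioi (0:ℝ), ‖deriv u t‖^2) + (∫ t in Ioi (0:ℝ), (t-ξ)^2*‖u t‖^2) + D := by
      have hdPI : IntegrableOn (fun t : ℝ => ‖deriv u t‖^2 + (t-ξ)^2*‖u t‖^2)
          (Ioi 0) volume := hdI.add hPI
      rw [e1, MeasureTheory.integral_add hdPI hcrossI,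
        MeasureTheory.integral_add hdI hPI]
    have hD : D = ξ*‖u 0‖^2 - N := by
      have : N + D - ξ*‖u 0‖^2 = 0 := hL0
      linarith
    rw [hsplit, hD]
    ring
  -- assemble
  have hNnn : 0 ≤ N := setIntegral_nonneg measurableSet_Ioi (fun t _ => sq_nonneg _)
  have hg0nn : (0:ℝ) ≤ ‖u 0‖^2 := sq_nonneg _
  set Jv : ℝ := ∫ t in Ioi (0:ℝ), ‖deriv u t + (t-ξ) • u t‖^2 with hJv_def
  have hJvnn : 0 ≤ Jv := setIntegral_nonneg measurableSet_Ioi (fun t _ => sq_nonneg _)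
  have hQsplit : (∫ t in Ioi (0:ℝ), (‖deriv u t‖ ^ 2 + (t - ξ) ^ 2 * ‖u t‖ ^ 2))
      = (∫ t in Ioi (0:ℝ), ‖deriv u t‖^2) + (∫ t in Ioi (0:ℝ), (t-ξ)^2*‖u t‖^2) :=
    MeasureTheory.integral_add hdI hPI
  have hIdent2 : (∫ t in Ioi (0:ℝ), ‖deriv u t‖^2) + (∫ t in Ioi (0:ℝ), (t-ξ)^2*‖u t‖^2)
      = N + Jv - ξ*‖u 0‖^2 := by
    linarith [hident]
  rw [hQsplit, hIdent2]
  have hγe : (0:ℝ) ≤ γ * Real.exp (-γ^2) := mul_nonneg (by linarith) (Real.exp_nonneg _)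
  clear_value D L
  rcases le_or_gt ξ γ with hcase | hcase
  · -- easy case ξ ≤ γ
    have h1 : 0 ≤ (γ - ξ)*‖u 0‖^2 := mul_nonneg (by linarith) hg0nn
    nlinarith [mul_nonneg hγe hNnn]
  · -- hard case γ < ξ
    have hξγ' : (0:ℝ) ≤ ξ - γ := by linarith
    have hc2 : (0:ℝ) < 2*ξ - γ - 1 := by linarith
    -- choose p ∈ [γ, γ+1] with ‖u p‖² ≤ N
    have hsubIoc : Ioc γ (γ+1) ⊆ Ioi (0:ℝ) := fun x hx => lt_trans (by linarith) hx.1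
    obtain ⟨p, hpI, hmin⟩ := isCompact_Icc.exists_isMinOn
      (nonempty_Icc.mpr (by linarith : γ ≤ γ+1)) (hgc.continuousOn (s := Icc γ (γ+1)))
    have hp1 : γ ≤ p := hpI.1
    have hp2 : p ≤ γ+1 := hpI.2
    have hp0 : (0:ℝ) ≤ p := by linarith
    have hgp : ‖u p‖^2 ≤ N := by
      have heq1 : (∫ _t in Ioc γ (γ+1), ‖u p‖^2) = ‖u p‖^2 := by
        rw [MeasureTheory.setIntegral_const, Real.volume_real_Ioc,
          show γ+1-γ = (1:ℝ) by ring]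
        all_goals simp
      have h1 : ‖u p‖^2 ≤ ∫ t in Ioc γ (γ+1), ‖u t‖^2 := by
        rw [← heq1]
        apply MeasureTheory.setIntegral_mono_on
        · exact integrableOn_const (by rw [Real.volume_Ioc]; exact ENNReal.ofReal_ne_top)
        · exact hgI.mono_set hsubIoc
        · exact measurableSet_Ioc
        · intro x hx
          exact isMinOn_iff.1 hmin x (Ioc_subset_Icc_self hx)
      have h2 : ∫ t in Ioc γ (γ+1), ‖u t‖^2 ≤ N := by
        apply MeasureTheory.setIntegral_mono_set hgI
        · filter_upwards with t using sq_nonneg _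
        · exact (hsubIoc).eventuallyLE
      linarith
    -- derivative of the weighted function
    have hwd : ∀ t : ℝ, HasDerivAt (fun t => Real.exp ((t-ξ)^2/2) • u t)
        (Real.exp ((t-ξ)^2/2) • (deriv u t + (t-ξ) • u t)) t := by
      intro t
      have hq : HasDerivAt (fun t : ℝ => (t-ξ)^2/2) (t-ξ) t := by
        have h := (((hasDerivAt_id t).sub_const ξ).fun_pow 2).div_const 2
        refine h.congr_deriv ?_
        simp only [id_eq]
        ring
      have hE : HasDerivAt (fun t => Real.exp ((t-ξ)^2/2)) (Real.exp ((t-ξ)^2/2) * (t-ξ)) t := hq.exp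
      have h := hE.fun_smul (hdiff t).hasDerivAt
      refine h.congr_deriv ?_
      rw [smul_add, smul_smul]
    have hEc : Continuous (fun t : ℝ => Real.exp ((t-ξ)^2/2)) :=
      Real.continuous_exp.comp (((continuous_id.sub continuous_const).pow 2).div_const 2)
    have hEvI : IntervalIntegrable
        (fun t => Real.exp ((t-ξ)^2/2) • (deriv u t + (t-ξ) • u t)) volume 0 p := by
      rw [intervalIntegrable_iff_integrableOn_Ioc_of_le hp0]
      apply Integrable.mono'
        (g := fun t => Real.exp (p^2 + ξ^2) * ((1 + ‖deriv u t + (t-ξ) • u t‖^2)/2))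
      · apply Integrable.const_mul
        apply Integrable.div_const
        apply Integrable.add
        · exact integrableOn_const (by rw [Real.volume_Ioc]; exact ENNReal.ofReal_ne_top)
        · exact hVI.mono_set Ioc_subset_Ioi_self
      · exact ((hEc.measurable).smul hmv).aestronglyMeasurable
      · rw [ae_restrict_iff' measurableSet_Ioc]
        filter_upwards with t ht
        rw [norm_smul, Real.norm_eq_abs, Real.abs_exp]
        have hE_le : Real.exp ((t-ξ)^2/2) ≤ Real.exp (p^2 + ξ^2) := by
          apply Real.exp_le_exp.2
          nlinarith [ht.1.le, ht.2, sq_nonneg (t+ξ), sq_nonneg (t-ξ), sq_nonneg t]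
        have hv_le : ‖deriv u t + (t-ξ) • u t‖ ≤ (1 + ‖deriv u t + (t-ξ) • u t‖^2)/2 := by
          nlinarith [sq_nonneg (‖deriv u t + (t-ξ) • u t‖ - 1), norm_nonneg (deriv u t + (t-ξ) • u t)]
        exact mul_le_mul hE_le hv_le (norm_nonneg _) (Real.exp_nonneg _)
    have hFTC2 := intervalIntegral.integral_eq_sub_of_hasDerivAt
      (f := fun t => Real.exp ((t-ξ)^2/2) • u t) (fun t _ => hwd t) hEvI
    have hbd0 : Real.exp (ξ^2/2) * ‖u 0‖ ≤ Real.exp ((p-ξ)^2/2) * ‖u p‖ +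
        ∫ t in (0:ℝ)..p, Real.exp ((t-ξ)^2/2) * ‖deriv u t + (t-ξ) • u t‖ := by
      have hw0 : (Real.exp (((0:ℝ)-ξ)^2/2) • u 0 : ℂ) = (Real.exp ((p-ξ)^2/2) • u p) -
          ∫ t in (0:ℝ)..p, Real.exp ((t-ξ)^2/2) • (deriv u t + (t-ξ) • u t) := by
        rw [hFTC2]; abel
      have h5 : ‖(Real.exp (((0:ℝ)-ξ)^2/2) • u 0 : ℂ)‖ ≤ ‖(Real.exp ((p-ξ)^2/2) • u p : ℂ)‖ +
          ‖∫ t in (0:ℝ)..p, Real.exp ((t-ξ)^2/2) • (deriv u t + (t-ξ) • u t)‖ := by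
        rw [hw0]; exact norm_sub_le _ _
      have h6 : ‖∫ t in (0:ℝ)..p, Real.exp ((t-ξ)^2/2) • (deriv u t + (t-ξ) • u t)‖ ≤
          ∫ t in (0:ℝ)..p, ‖Real.exp ((t-ξ)^2/2) • (deriv u t + (t-ξ) • u t)‖ :=
        intervalIntegral.norm_integral_le_integral_norm hp0
      have h7 : (∫ t in (0:ℝ)..p, ‖Real.exp ((t-ξ)^2/2) • (deriv u t + (t-ξ) • u t)‖)
          = ∫ t in (0:ℝ)..p, Real.exp ((t-ξ)^2/2) * ‖deriv u t + (t-ξ) • u t‖ := by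
        apply intervalIntegral.integral_congr
        intro t _
        simp only [norm_smul, Real.norm_eq_abs, Real.abs_exp]
      simp only [norm_smul, Real.norm_eq_abs, Real.abs_exp] at h5
      rw [show ((0:ℝ)-ξ)^2 = ξ^2 by ring] at h5
      linarith
    -- Cauchy-Schwarz with explicit weight bound
    set K : ℝ := ∫ t in (0:ℝ)..p, Real.exp ((t-ξ)^2/2) * ‖deriv u t + (t-ξ) • u t‖ with hK_def
    have hKnn : 0 ≤ K := by
      rw [hK_def]
      apply intervalIntegral.integral_nonneg hp0
      intro t _
      exact mul_nonneg (Real.exp_nonneg _) (norm_nonneg _)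
    have hEsq0 : ∫ t in (0:ℝ)..p, Real.exp (-((2*ξ-γ-1)*t)) ≤ 1/(2*ξ-γ-1) := by
      have hF : ∀ t : ℝ, HasDerivAt (fun t => -Real.exp (-((2*ξ-γ-1)*t))/(2*ξ-γ-1))
          (Real.exp (-((2*ξ-γ-1)*t))) t := by
        intro t
        have h := ((((hasDerivAt_id t).const_mul (2*ξ-γ-1)).fun_neg).exp.div_const (2*ξ-γ-1)).fun_neg
        refine (h.congr_of_eventuallyEq (Filter.Eventually.of_forall ?_)).congr_deriv ?_
        · intro x; simp only [id_eq]; ring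
        · simp only [id_eq]; field_simp; try ring
      have hInt := intervalIntegral.integral_eq_sub_of_hasDerivAt
        (fun t (_ : t ∈ uIcc 0 p) => hF t)
        ((Real.continuous_exp.comp ((continuous_const.mul continuous_id).neg)).intervalIntegrable 0 p)
      rw [hInt]
      simp only [mul_zero, neg_zero, Real.exp_zero]
      have he := Real.exp_nonneg (-((2*ξ-γ-1)*p))
      rw [show -Real.exp (-((2*ξ-γ-1)*p))/(2*ξ-γ-1) - -1/(2*ξ-γ-1)
          = (1 - Real.exp (-((2*ξ-γ-1)*p)))/(2*ξ-γ-1) by ring]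
      gcongr
      linarith
    have hEsq2 : ∫ t in (0:ℝ)..p, (Real.exp ((t-ξ)^2/2))^2 ≤ Real.exp (ξ^2)/(2*ξ-γ-1) := by
      have hint1 : IntervalIntegrable (fun t => (Real.exp ((t-ξ)^2/2))^2) volume 0 p :=
        ((hEc.pow 2)).intervalIntegrable 0 p
      have hint2 : IntervalIntegrable (fun t => Real.exp (ξ^2) * Real.exp (-((2*ξ-γ-1)*t)))
          volume 0 p :=
        (continuous_const.mul
          (Real.continuous_exp.comp ((continuous_const.mul continuous_id).neg))).intervalIntegrable 0 p
      have hpt2 : ∀ t ∈ Icc (0:ℝ) p, (Real.exp ((t-ξ)^2/2))^2 ≤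
          Real.exp (ξ^2) * Real.exp (-((2*ξ-γ-1)*t)) := by
        intro t ht
        rw [sq, ← Real.exp_add, ← Real.exp_add]
        apply Real.exp_le_exp.2
        nlinarith [ht.1, ht.2, hp2]
      calc ∫ t in (0:ℝ)..p, (Real.exp ((t-ξ)^2/2))^2
          ≤ ∫ t in (0:ℝ)..p, Real.exp (ξ^2) * Real.exp (-((2*ξ-γ-1)*t)) :=
            intervalIntegral.integral_mono_on hp0 hint1 hint2 hpt2
        _ = Real.exp (ξ^2) * ∫ t in (0:ℝ)..p, Real.exp (-((2*ξ-γ-1)*t)) :=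
            intervalIntegral.integral_const_mul _ _
        _ ≤ Real.exp (ξ^2) * (1/(2*ξ-γ-1)) :=
            mul_le_mul_of_nonneg_left hEsq0 (Real.exp_nonneg _)
        _ = Real.exp (ξ^2)/(2*ξ-γ-1) := by ring
    have hJa : ∫ t in (0:ℝ)..p, ‖deriv u t + (t-ξ) • u t‖^2 ≤ Jv := by
      rw [intervalIntegral.integral_of_le hp0]
      apply MeasureTheory.setIntegral_mono_set hVI
      · filter_upwards with t using sq_nonneg _
      · exact (Ioc_subset_Ioi_self).eventuallyLE
    have hKint : IntervalIntegrable
        (fun t => Real.exp ((t-ξ)^2/2) * ‖deriv u t + (t-ξ) • u t‖) volume 0 p := by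
      have heq : (fun t => ‖Real.exp ((t-ξ)^2/2) • (deriv u t + (t-ξ) • u t)‖)
          = (fun t => Real.exp ((t-ξ)^2/2) * ‖deriv u t + (t-ξ) • u t‖) := by
        funext t
        rw [norm_smul, Real.norm_eq_abs, Real.abs_exp]
      rw [← heq]
      exact hEvI.norm
    have hVint : IntervalIntegrable (fun t => ‖deriv u t + (t-ξ) • u t‖^2) volume 0 p := by
      rw [intervalIntegrable_iff_integrableOn_Ioc_of_le hp0]
      exact hVI.mono_set Ioc_subset_Ioi_self
    have hcs : ∀ c : ℝ, 0 < c → 2*K ≤ c*(Real.exp (ξ^2)/(2*ξ-γ-1)) + Jv/c := by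
      intro c hc
      have h2K : 2*K = ∫ t in (0:ℝ)..p,
          2*(Real.exp ((t-ξ)^2/2) * ‖deriv u t + (t-ξ) • u t‖) := by
        rw [hK_def, ← intervalIntegral.integral_const_mul]
      have hmono : (∫ t in (0:ℝ)..p,
          2*(Real.exp ((t-ξ)^2/2) * ‖deriv u t + (t-ξ) • u t‖))
          ≤ ∫ t in (0:ℝ)..p,
            (c*(Real.exp ((t-ξ)^2/2))^2 + ‖deriv u t + (t-ξ) • u t‖^2/c) := by
        apply intervalIntegral.integral_mono_on hp0 (hKint.const_mul 2)
          (((continuous_const.fun_mul (hEc.fun_pow 2)).intervalIntegrable 0 p).add (hVint.div_const c))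
        intro t _
        have hid : (c*(Real.exp ((t-ξ)^2/2))^2 + ‖deriv u t + (t-ξ) • u t‖^2/c)*c
            = c^2*(Real.exp ((t-ξ)^2/2))^2 + ‖deriv u t + (t-ξ) • u t‖^2 := by
          field_simp
        apply le_of_mul_le_mul_right _ hc
        rw [hid]
        nlinarith [sq_nonneg (c*Real.exp ((t-ξ)^2/2) - ‖deriv u t + (t-ξ) • u t‖)]
      have hsplit2 : (∫ t in (0:ℝ)..p,
          (c*(Real.exp ((t-ξ)^2/2))^2 + ‖deriv u t + (t-ξ) • u t‖^2/c))
          = c*(∫ t in (0:ℝ)..p, (Real.exp ((t-ξ)^2/2))^2)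
            + (∫ t in (0:ℝ)..p, ‖deriv u t + (t-ξ) • u t‖^2)/c := by
        rw [intervalIntegral.integral_add ((continuous_const.fun_mul (hEc.fun_pow 2)).intervalIntegrable 0 p)
          (hVint.div_const c), intervalIntegral.integral_const_mul,
          intervalIntegral.integral_div]
      rw [h2K]
      calc (∫ t in (0:ℝ)..p, 2*(Real.exp ((t-ξ)^2/2) * ‖deriv u t + (t-ξ) • u t‖))
          ≤ c*(∫ t in (0:ℝ)..p, (Real.exp ((t-ξ)^2/2))^2)
            + (∫ t in (0:ℝ)..p, ‖deriv u t + (t-ξ) • u t‖^2)/c := by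
            rw [← hsplit2]; exact hmono
        _ ≤ c*(Real.exp (ξ^2)/(2*ξ-γ-1)) + Jv/c := by
            apply add_le_add
            · exact mul_le_mul_of_nonneg_left hEsq2 hc.le
            · exact by gcongr
    have hK2 : K^2 ≤ (Real.exp (ξ^2)/(2*ξ-γ-1)) * Jv :=
      cs_aux (by positivity) hJvnn hKnn hcs
    clear_value K N Jv
    -- squared boundary bound
    have haux : (Real.exp (ξ^2/2)*‖u 0‖)^2 ≤ 2*(Real.exp ((p-ξ)^2/2)*‖u p‖)^2 + 2*K^2 := by
      nlinarith [hbd0, hKnn, mul_nonneg (Real.exp_nonneg ((p-ξ)^2/2)) (norm_nonneg (u p)),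
        mul_nonneg (Real.exp_nonneg (ξ^2/2)) (norm_nonneg (u 0)),
        sq_nonneg (Real.exp ((p-ξ)^2/2)*‖u p‖ - K)]
    have hx2 : (Real.exp (ξ^2/2))^2 = Real.exp (ξ^2) := by
      rw [sq, ← Real.exp_add]; ring_nf
    have hy2 : (Real.exp ((p-ξ)^2/2))^2 = Real.exp ((p-ξ)^2) := by
      rw [sq, ← Real.exp_add]; ring_nf
    have hsq : Real.exp (ξ^2) * ‖u 0‖^2 ≤ 2*(Real.exp ((p-ξ)^2) * ‖u p‖^2) + 2*K^2 := by
      have e1 : (Real.exp (ξ^2/2)*‖u 0‖)^2 = Real.exp (ξ^2) * ‖u 0‖^2 := by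
        rw [mul_pow, hx2]
      have e2 : (Real.exp ((p-ξ)^2/2)*‖u p‖)^2 = Real.exp ((p-ξ)^2) * ‖u p‖^2 := by
        rw [mul_pow, hy2]
      rw [← e1, ← e2]
      exact haux
    -- exponential smallness
    have hb1 : 2*(ξ-γ)*Real.exp ((p-ξ)^2) ≤ (Real.exp (-γ^2)/γ) * Real.exp (ξ^2) := by
      have haux2 : (p-γ)^2 ≤ 1 := by nlinarith [hp1, hp2]
      have hexp_le : Real.exp ((p-ξ)^2) ≤ Real.exp (1 - γ^2 - 2*γ*(ξ-γ)) * Real.exp (ξ^2) := by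
        rw [← Real.exp_add]
        apply Real.exp_le_exp.2
        nlinarith [haux2, mul_nonneg (sub_nonneg.2 hp1) hξγ']
      have hkey := key_exp (by linarith : (1:ℝ) ≤ γ) hξγ'
      calc 2*(ξ-γ)*Real.exp ((p-ξ)^2)
          ≤ 2*(ξ-γ)*(Real.exp (1 - γ^2 - 2*γ*(ξ-γ)) * Real.exp (ξ^2)) := by
            apply mul_le_mul_of_nonneg_left hexp_le (by linarith)
        _ = (2*(ξ-γ)*Real.exp (1 - γ^2 - 2*γ*(ξ-γ))) * Real.exp (ξ^2) := by ring
        _ ≤ (Real.exp (-γ^2)/γ) * Real.exp (ξ^2) :=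
            mul_le_mul_of_nonneg_right hkey (Real.exp_nonneg _)
    have hb2 : 2*(ξ-γ)*(Real.exp (ξ^2)/(2*ξ-γ-1)) ≤ Real.exp (ξ^2) := by
      rw [mul_div_assoc', div_le_iff₀ hc2]
      nlinarith [Real.exp_nonneg (ξ^2), Real.exp_pos (ξ^2)]
    -- combine
    have hcomb : (ξ-γ)*(Real.exp (ξ^2)*‖u 0‖^2) ≤
        (Real.exp (-γ^2)/γ)*Real.exp (ξ^2)*N + Real.exp (ξ^2)*Jv := by
      have m2 : (ξ-γ)*(2*(Real.exp ((p-ξ)^2) * ‖u p‖^2)) ≤ (2*(ξ-γ)*Real.exp ((p-ξ)^2))*N := by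
        calc (ξ-γ)*(2*(Real.exp ((p-ξ)^2) * ‖u p‖^2))
            = (2*(ξ-γ)*Real.exp ((p-ξ)^2)) * ‖u p‖^2 := by ring
          _ ≤ (2*(ξ-γ)*Real.exp ((p-ξ)^2)) * N := mul_le_mul_of_nonneg_left hgp
              (mul_nonneg (by linarith : (0:ℝ) ≤ 2*(ξ-γ)) (Real.exp_nonneg ((p-ξ)^2)))
      have m3 : (ξ-γ)*(2*K^2) ≤ Real.exp (ξ^2)*Jv := by
        have t1 := mul_le_mul_of_nonneg_left hK2 (by linarith : (0:ℝ) ≤ 2*(ξ-γ))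
        have t2 := mul_le_mul_of_nonneg_right hb2 hJvnn
        calc (ξ-γ)*(2*K^2) = (2*(ξ-γ))*K^2 := by ring
          _ ≤ (2*(ξ-γ))*((Real.exp (ξ^2)/(2*ξ-γ-1)) * Jv) := t1
          _ = (2*(ξ-γ)*(Real.exp (ξ^2)/(2*ξ-γ-1)))*Jv := by ring
          _ ≤ Real.exp (ξ^2)*Jv := t2
      have t3 := mul_le_mul_of_nonneg_right hb1 hNnn
      calc (ξ-γ)*(Real.exp (ξ^2)*‖u 0‖^2)
          ≤ (ξ-γ)*(2*(Real.exp ((p-ξ)^2) * ‖u p‖^2) + 2*K^2) :=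
            mul_le_mul_of_nonneg_left hsq hξγ'
        _ = (ξ-γ)*(2*(Real.exp ((p-ξ)^2) * ‖u p‖^2)) + (ξ-γ)*(2*K^2) := by ring
        _ ≤ (2*(ξ-γ)*Real.exp ((p-ξ)^2))*N + Real.exp (ξ^2)*Jv := add_le_add m2 m3
        _ ≤ ((Real.exp (-γ^2)/γ) * Real.exp (ξ^2))*N + Real.exp (ξ^2)*Jv :=
            add_le_add t3 (le_refl _)
        _ = (Real.exp (-γ^2)/γ)*Real.exp (ξ^2)*N + Real.exp (ξ^2)*Jv := by ring
    have hstepD : (ξ-γ)*‖u 0‖^2 ≤ (Real.exp (-γ^2)/γ)*N + Jv := by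
      have hepos := Real.exp_pos (ξ^2)
      apply le_of_mul_le_mul_right _ hepos
      calc (ξ-γ)*‖u 0‖^2 * Real.exp (ξ^2) = (ξ-γ)*(Real.exp (ξ^2)*‖u 0‖^2) := by ring
        _ ≤ (Real.exp (-γ^2)/γ)*Real.exp (ξ^2)*N + Real.exp (ξ^2)*Jv := hcomb
        _ = ((Real.exp (-γ^2)/γ)*N + Jv) * Real.exp (ξ^2) := by ring
    -- conclude
    have hfin : Real.exp (-γ^2)/γ ≤ γ*Real.exp (-γ^2) := by
      rw [div_le_iff₀ (by linarith : (0:ℝ) < γ)]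
      nlinarith [Real.exp_nonneg (-γ^2)]
    have hfinN := mul_le_mul_of_nonneg_right hfin hNnn
    nlinarith [hstepD, hfinN, mul_nonneg hγe hNnn]
lemma gauss_hasDerivAt (t : ℝ) :
    HasDerivAt (fun t : ℝ => Real.exp (-t^2/2)) (-t * Real.exp (-t^2/2)) t := by
  have hq : HasDerivAt (fun t : ℝ => -t^2/2) (-t) t := by
    have h := (((hasDerivAt_id t).fun_pow 2).fun_neg).div_const 2
    refine h.congr_deriv ?_
    simp only [id_eq]
    ring
  have h := hq.exp
  convert h using 1
  ring

lemma robin_set_nonempty (γ ξ : ℝ) : {r : ℝ | ∃ u : ℝ → ℂ, MemB1Half u ∧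
    (0 < ∫ t in Ioi (0:ℝ), ‖u t‖ ^ 2) ∧
    r = ((∫ t in Ioi (0:ℝ), (‖deriv u t‖ ^ 2 + (t - ξ) ^ 2 * ‖u t‖ ^ 2)) + γ * ‖u 0‖ ^ 2) /
      ∫ t in Ioi (0:ℝ), ‖u t‖ ^ 2}.Nonempty := by
  set u₀ : ℝ → ℂ := fun t => ((Real.exp (-t^2/2) : ℝ) : ℂ) with hu₀_def
  have hu0d : ∀ t : ℝ, HasDerivAt u₀ (((-t * Real.exp (-t^2/2) : ℝ) : ℂ)) t := fun t =>
    Complex.ofRealCLM.hasFDerivAt.comp_hasDerivAt t (gauss_hasDerivAt t)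
  have hdiff : Differentiable ℝ u₀ := fun t => (hu0d t).differentiableAt
  have hderiv_eq : ∀ t, deriv u₀ t = ((-t * Real.exp (-t^2/2) : ℝ) : ℂ) := fun t => (hu0d t).deriv
  have hnorm : ∀ t, ‖u₀ t‖^2 = Real.exp (-t^2) := by
    intro t
    rw [hu₀_def]
    rw [Complex.norm_real, Real.norm_eq_abs, Real.abs_exp, sq, ← Real.exp_add]
    ring_nf
  have hnormd : ∀ t, ‖deriv u₀ t‖^2 = t^2 * Real.exp (-t^2) := by
    intro t
    rw [hderiv_eq t, Complex.norm_real, Real.norm_eq_abs, abs_mul, Real.abs_exp, mul_pow,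
      sq (Real.exp _), ← Real.exp_add]
    rw [show |(-t)| = |t| by rw [abs_neg], sq_abs]
    ring_nf
  have hInt1 : Integrable (fun t : ℝ => Real.exp (-t^2)) volume := by
    have h := integrable_exp_neg_mul_sq (by norm_num : (0:ℝ) < 1)
    have e : (fun x : ℝ => Real.exp (-1*x^2)) = (fun x : ℝ => Real.exp (-x^2)) := by
      funext x; ring_nf
    rwa [e] at h
  have hInt2 : Integrable (fun t : ℝ => t^2 * Real.exp (-t^2)) volume := by
    apply Integrable.mono' ((integrable_exp_neg_mul_sq (by norm_num : (0:ℝ) < 1/2)).const_mul 2)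
    · exact (((continuous_id.pow 2).mul
        (Real.continuous_exp.comp ((continuous_id.pow 2).neg))).aestronglyMeasurable)
    · filter_upwards with t
      rw [Real.norm_eq_abs, abs_of_nonneg (by positivity)]
      have h1 : t^2 ≤ 2*Real.exp (t^2/2) := by
        nlinarith [Real.add_one_le_exp (t^2/2)]
      have h2 : Real.exp (t^2/2) * Real.exp (-t^2) = Real.exp (-(1/2*t^2)) := by
        rw [← Real.exp_add]; ring_nf
      calc t^2*Real.exp (-t^2) ≤ (2*Real.exp (t^2/2))*Real.exp (-t^2) :=
            mul_le_mul_of_nonneg_right h1 (Real.exp_nonneg _)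
        _ = 2*Real.exp (-(1/2*t^2)) := by rw [mul_assoc, h2]
        _ = 2*Real.exp (-(1/2)*t^2) := by ring_nf
  have e2 : (fun t : ℝ => ‖u₀ t‖^2) = fun t : ℝ => Real.exp (-t^2) := funext hnorm
  have hmem : MemB1Half u₀ := by
    refine ⟨hdiff, ?_, ?_, ?_⟩
    · rw [show (fun t : ℝ => ‖u₀ t‖^2) = fun t : ℝ => Real.exp (-t^2) from e2]
      exact hInt1.integrableOn
    · rw [show (fun t : ℝ => ‖deriv u₀ t‖^2) = fun t : ℝ => t^2 * Real.exp (-t^2)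
        from funext hnormd]
      exact hInt2.integrableOn
    · rw [show (fun t : ℝ => t^2 * ‖u₀ t‖^2) = fun t : ℝ => t^2 * Real.exp (-t^2) by
        funext t; rw [hnorm t]]
      exact hInt2.integrableOn
  have hpos : 0 < ∫ t in Ioi (0:ℝ), ‖u₀ t‖^2 := by
    rw [show (fun t : ℝ => ‖u₀ t‖^2) = fun t : ℝ => Real.exp (-t^2) from e2]
    rw [MeasureTheory.setIntegral_pos_iff_support_of_nonneg_ae]
    · have hsupp : Function.support (fun t : ℝ => Real.exp (-t^2)) = univ := by
        apply Set.eq_univ_of_forall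
        intro x
        simp [Function.mem_support, Real.exp_ne_zero]
      rw [hsupp, univ_inter, Real.volume_Ioi]
      simp
    · filter_upwards with t using Real.exp_nonneg _
    · exact hInt1.integrableOn
  exact ⟨_, u₀, hmem, hpos, rfl⟩

/-- There exist `C₀, γ₀ > 0` such that `Θ(γ) ≥ 1 - C₀ γ e^{-γ²}` for all `γ ≥ γ₀`. -/
theorem Theta_lower_bound_large_gamma :
    ∃ C₀ > (0:ℝ), ∃ γ₀ > (0:ℝ), ∀ γ : ℝ, γ₀ ≤ γ →
      1 - C₀ * γ * Real.exp (-γ ^ 2) ≤ Theta γ := by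
  refine ⟨1, one_pos, 2, by norm_num, fun γ hγ => ?_⟩
  have key : ∀ ξ : ℝ, 1 - γ*Real.exp (-γ^2) ≤ robinMu γ ξ := by
    intro ξ
    apply le_csInf (robin_set_nonempty γ ξ)
    rintro r ⟨u, hu, hNpos, rfl⟩
    rw [le_div_iff₀ hNpos]
    have h := quad_lower (γ := γ) (ξ := ξ) hγ hu
    linarith
  have h2 := le_ciInf key
  calc 1 - 1*γ*Real.exp (-γ^2) = 1 - γ*Real.exp (-γ^2) := by ring
    _ ≤ Theta γ := h2
end
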